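/- Let k, m ≥ 2 and q = ⌈k/m⌉. Suppose C_{k,q+d} ≥ C_{k,k−d} for all integers 0 ≤ d ≤ (k−q)/2. Let S_1, S_2 be finite intervals of positive integers with |S_1| = |S_2|, min S_1 + max S_2 ≥ k + q, and min S_1 ≤ min S_2. Then ∑_{i ∈ S_1} C_{k,i} ≥ ∑_{i ∈ S_2} C_{k,i}. -/

import Mathlib

def C (m k ℓ : ℕ) : ℕ :=
  (Finset.univ.filter (fun f : Fin ℓ → Fin m => ∑ i, ((f i : ℕ) + 1) = k)).card


noncomputable def fseq (m : ℕ) : ℕ → ℤ → ℕ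
  | 0, t => if t = 0 then 1 else 0
  | (ℓ+1), t => ∑ c ∈ Finset.Icc (1:ℤ) (m:ℤ), fseq m ℓ (t - c)

lemma fseq_succ (m ℓ : ℕ) (t : ℤ) :
    fseq m (ℓ+1) t = ∑ c ∈ Finset.Icc (1:ℤ) (m:ℤ), fseq m ℓ (t - c) := rfl

lemma fseq_lt (m : ℕ) : ∀ (ℓ : ℕ) (x : ℤ), x < ℓ → fseq m ℓ x = 0 := by
  intro ℓ
  induction ℓ with
  | zero => intro x hx; simp [fseq]; omega
  | succ n ih =>
    intro x hx
    rw [fseq_succ]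
    apply Finset.sum_eq_zero
    intro c hc
    simp only [Finset.mem_Icc] at hc
    apply ih
    push_cast at hx ⊢
    omega

lemma fseq_pos (m : ℕ) (hm : 1 ≤ m) :
    ∀ (ℓ : ℕ) (x : ℤ), (ℓ:ℤ) ≤ x → x ≤ (m:ℤ) * ℓ → 0 < fseq m ℓ x := by
  intro ℓ
  induction ℓ with
  | zero =>
    intro x h1 h2
    have hx : x = 0 := le_antisymm (by simpa using h2) (by simpa using h1)
    simp [fseq, hx]
  | succ n ih =>
    intro x h1 h2
    rw [fseq_succ]
    have hc0 : max 1 (x - (m:ℤ)*n) ∈ Finset.Icc (1:ℤ) (m:ℤ) := by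
      simp only [Finset.mem_Icc]
      push_cast at h1 h2 ⊢
      constructor
      · exact le_max_left _ _
      · apply max_le
        · exact_mod_cast hm
        · nlinarith
    apply lt_of_lt_of_le _ (Finset.single_le_sum (f := fun c => fseq m n (x - c)) (fun _ _ => Nat.zero_le _) hc0)
    apply ih
    · push_cast at h1 ⊢
      have := le_max_right (1:ℤ) (x - (m:ℤ)*n)
      have := le_max_left (1:ℤ) (x - (m:ℤ)*n)
      have h3 : max 1 (x - (m:ℤ)*n) ≤ x - n := by
        apply max_le <;> [omega; nlinarith]
      omega
    · have := le_max_right (1:ℤ) (x - (m:ℤ)*n)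
      omega

-- reindexing: ∑_{c ∈ [1,m]} G (x−c) = ∑_{y ∈ [x−m, x−1]} G y
lemma sum_shift (m : ℕ) (G : ℤ → ℤ) (x : ℤ) :
    ∑ c ∈ Finset.Icc (1:ℤ) (m:ℤ), G (x - c) = ∑ y ∈ Finset.Icc (x - m) (x - 1), G y := by
  apply Finset.sum_nbij' (i := fun c => x - c) (j := fun y => x - y)
  · intro a ha; simp only [Finset.mem_Icc] at ha ⊢; omega
  · intro a ha; simp only [Finset.mem_Icc] at ha ⊢; omega
  · intro a _; ring
  · intro a _; ring
  · intro a _; rfl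

lemma fseq_cast_sum (m ℓ : ℕ) (x : ℤ) :
    (fseq m (ℓ+1) x : ℤ) = ∑ y ∈ Finset.Icc (x - m) (x - 1), (fseq m ℓ y : ℤ) := by
  rw [fseq_succ]
  push_cast
  exact sum_shift m (fun y => (fseq m ℓ y : ℤ)) x

lemma Icc_congr (a b a' b' : ℤ) (h1 : a = a') (h2 : b = b') :
    Finset.Icc a b = Finset.Icc a' b' := by rw [h1, h2]

-- E1 telescope: for a ≤ b : ∑_{[a−1,b−1]} F + F b = ∑_{[a,b]} F + F (a−1)
lemma sum_telescope (F : ℤ → ℤ) (a b : ℤ) (hab : a ≤ b) :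
    (∑ y ∈ Finset.Icc (a-1) (b-1), F y) + F b = (∑ y ∈ Finset.Icc a b, F y) + F (a-1) := by
  have h1 : Finset.Icc (a-1) b = insert (a-1) (Finset.Icc a b) := by
    ext x; simp only [Finset.mem_Icc, Finset.mem_insert]; omega
  have h2 : Finset.Icc (a-1) b = insert b (Finset.Icc (a-1) (b-1)) := by
    ext x; simp only [Finset.mem_Icc, Finset.mem_insert]; omega
  have m1 : (a-1) ∉ Finset.Icc a b := by simp only [Finset.mem_Icc]; omega
  have m2 : b ∉ Finset.Icc (a-1) (b-1) := by simp only [Finset.mem_Icc]; omega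
  have e1 : ∑ y ∈ Finset.Icc (a-1) b, F y = F (a-1) + ∑ y ∈ Finset.Icc a b, F y := by
    rw [h1, Finset.sum_insert m1]
  have e2 : ∑ y ∈ Finset.Icc (a-1) b, F y = F b + ∑ y ∈ Finset.Icc (a-1) (b-1), F y := by
    rw [h2, Finset.sum_insert m2]
  linarith

lemma fseq_TP (m : ℕ) (hm : 1 ≤ m) : ∀ (ℓ : ℕ) (s t : ℤ), s ≤ t →
    fseq m ℓ (s-1) * fseq m ℓ (t+1) ≤ fseq m ℓ s * fseq m ℓ t := by
  intro ℓ
  induction ℓ with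
  | zero =>
    intro s t hst
    simp only [fseq]
    split_ifs <;> simp_all <;> omega
  | succ n ih =>
    -- four-point lemma at level n
    have FP : ∀ (d : ℕ) (a b : ℤ), a ≤ b →
        fseq m n (a - d) * fseq m n (b + d) ≤ fseq m n a * fseq m n b := by
      intro d
      induction d with
      | zero => intro a b _; simp
      | succ e ihe =>
        intro a b hab
        have ha : (a - ((e:ℤ)+1)) = (a - e) - 1 := by ring
        have hb : (b + ((e:ℤ)+1)) = (b + e) + 1 := by ring
        calc fseq m n (a - (e+1:ℕ)) * fseq m n (b + (e+1:ℕ))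
            = fseq m n ((a - e) - 1) * fseq m n ((b + e) + 1) := by
              push_cast; rw [ha, hb]
          _ ≤ fseq m n (a - e) * fseq m n (b + e) := ih _ _ (by linarith [Int.natCast_nonneg e])
          _ ≤ fseq m n a * fseq m n b := ihe a b hab
    intro s t hst
    -- work in ℤ
    rw [← Nat.cast_le (α := ℤ)]
    push_cast
    set F : ℤ → ℤ := fun y => (fseq m n y : ℤ) with hF
    have Fnn : ∀ y, 0 ≤ F y := fun y => Int.natCast_nonneg _
    have hs1 : (fseq m (n+1) (s-1) : ℤ) = ∑ y ∈ Finset.Icc (s-1-m) (s-2), F y := by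
      rw [fseq_cast_sum, Icc_congr (s-1-(m:ℤ)) (s-1-1) (s-1-m) (s-2) rfl (by ring)]
    have hs2 : (fseq m (n+1) (t+1) : ℤ) = ∑ y ∈ Finset.Icc (t+1-m) t, F y := by
      rw [fseq_cast_sum, Icc_congr (t+1-(m:ℤ)) (t+1-1) (t+1-m) t rfl (by ring)]
    have hs3 : (fseq m (n+1) s : ℤ) = ∑ y ∈ Finset.Icc (s-m) (s-1), F y := by
      rw [fseq_cast_sum]
    have hs4 : (fseq m (n+1) t : ℤ) = ∑ y ∈ Finset.Icc (t-m) (t-1), F y := by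
      rw [fseq_cast_sum]
    rw [hs1, hs2, hs3, hs4]
    set P := ∑ y ∈ Finset.Icc (s-m) (s-1), F y with hP
    set Q := ∑ y ∈ Finset.Icc (t-m) (t-1), F y with hQ
    set S1 := ∑ y ∈ Finset.Icc (s-1-m) (s-2), F y with hS1
    set S2 := ∑ y ∈ Finset.Icc (t+1-m) t, F y with hS2
    have hmz : (1:ℤ) ≤ m := by exact_mod_cast hm
    -- telescopes
    have e1 : S1 + F (s-1) = P + F (s-1-m) := by
      have h := sum_telescope F (s-m) (s-1) (by omega)
      rw [Icc_congr (s-(m:ℤ)-1) (s-1-1) (s-1-m) (s-2) (by ring) (by ring),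
        show (s-(m:ℤ)-1) = s-1-m by ring] at h
      rw [hS1, hP]
      linarith
    have e2 : S2 + F (t-m) = Q + F t := by
      have h := sum_telescope F (t+1-m) t (by omega)
      rw [Icc_congr (t+1-(m:ℤ)-1) (t-1) (t-m) (t-1) (by ring) rfl,
        show (t+1-(m:ℤ)-1) = t-m by ring] at h
      rw [hS2, hQ]
      linarith
    -- key sum inequality : F t * P + F (s-1-m) * S2 ≤ F (s-1) * S2 + F (t-m) * P
    have hPs : P = ∑ c ∈ Finset.Icc (1:ℤ) (m:ℤ), F (s - c) := by
      rw [hP, sum_shift]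
    have hS2s : S2 = ∑ c ∈ Finset.Icc (1:ℤ) (m:ℤ), F (t + 1 - c) := by
      rw [hS2, sum_shift, Icc_congr (t+1-(m:ℤ)) (t+1-1) (t+1-m) t rfl (by ring)]
    have key : F t * P + F (s-1-m) * S2 ≤ F (s-1) * S2 + F (t-m) * P := by
      rw [hPs, hS2s, Finset.mul_sum, Finset.mul_sum, Finset.mul_sum, Finset.mul_sum,
        ← Finset.sum_add_distrib, ← Finset.sum_add_distrib]
      apply Finset.sum_le_sum
      intro c hc
      simp only [Finset.mem_Icc] at hc
      have hA : F t * F (s - c) ≤ F (s-1) * F (t + 1 - c) := by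
        rcases le_total (s-1) (t+1-c) with h | h
        · -- a = s-1, b = t+1-c, d = c-1
          have := FP (c-1).toNat (s-1) (t+1-c) h
          have harg1 : (s-1) - ((c-1).toNat : ℤ) = s - c := by omega
          have harg2 : (t+1-c) + ((c-1).toNat : ℤ) = t := by omega
          rw [harg1, harg2] at this
          calc F t * F (s-c) = (fseq m n (s-c) * fseq m n t : ℕ) := by push_cast [hF]; ring
            _ ≤ (fseq m n (s-1) * fseq m n (t+1-c) : ℕ) := by exact_mod_cast this
            _ = F (s-1) * F (t+1-c) := by push_cast [hF]; ring
        · -- a = t+1-c, b = s-1, d = t+1-s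
          have := FP (t+1-s).toNat (t+1-c) (s-1) h
          have harg1 : (t+1-c) - ((t+1-s).toNat : ℤ) = s - c := by omega
          have harg2 : (s-1) + ((t+1-s).toNat : ℤ) = t := by omega
          rw [harg1, harg2] at this
          calc F t * F (s-c) = (fseq m n (s-c) * fseq m n t : ℕ) := by push_cast [hF]; ring
            _ ≤ (fseq m n (t+1-c) * fseq m n (s-1) : ℕ) := by exact_mod_cast this
            _ = F (s-1) * F (t+1-c) := by push_cast [hF]; ring
      have hB : F (s-1-m) * F (t + 1 - c) ≤ F (t-m) * F (s - c) := by
        rcases le_total (t-m) (s-c) with h | h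
        · -- a = t-m, b = s-c, d = t-s+1
          have := FP (t-s+1).toNat (t-m) (s-c) h
          have harg1 : (t-m) - ((t-s+1).toNat : ℤ) = s-1-m := by omega
          have harg2 : (s-c) + ((t-s+1).toNat : ℤ) = t+1-c := by omega
          rw [harg1, harg2] at this
          calc F (s-1-m) * F (t+1-c) = (fseq m n (s-1-m) * fseq m n (t+1-c) : ℕ) := by
                push_cast [hF]; ring
            _ ≤ (fseq m n (t-m) * fseq m n (s-c) : ℕ) := by exact_mod_cast this
            _ = F (t-m) * F (s-c) := by push_cast [hF]; ring
        · -- a = s-c, b = t-m, d = m+1-c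
          have := FP (m+1-c).toNat (s-c) (t-m) h
          have harg1 : (s-c) - ((m+1-c).toNat : ℤ) = s-1-m := by omega
          have harg2 : (t-m) + ((m+1-c).toNat : ℤ) = t+1-c := by omega
          rw [harg1, harg2] at this
          calc F (s-1-m) * F (t+1-c) = (fseq m n (s-1-m) * fseq m n (t+1-c) : ℕ) := by
                push_cast [hF]; ring
            _ ≤ (fseq m n (s-c) * fseq m n (t-m) : ℕ) := by exact_mod_cast this
            _ = F (t-m) * F (s-c) := by push_cast [hF]; ring
      linarith
    have e1' : S1 = P + F (s-1-m) - F (s-1) := by linarith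
    have e2' : Q = S2 + F (t-m) - F t := by linarith
    rw [e1', e2']
    nlinarith [key]

lemma fseq_FP (m : ℕ) (hm : 1 ≤ m) (ℓ : ℕ) : ∀ (d : ℕ) (a b : ℤ), a ≤ b →
    fseq m ℓ (a - d) * fseq m ℓ (b + d) ≤ fseq m ℓ a * fseq m ℓ b := by
  intro d
  induction d with
  | zero => intro a b _; simp
  | succ e ihe =>
    intro a b hab
    have ha : (a - ((e:ℤ)+1)) = (a - e) - 1 := by ring
    have hb : (b + ((e:ℤ)+1)) = (b + e) + 1 := by ring
    calc fseq m ℓ (a - (e+1:ℕ)) * fseq m ℓ (b + (e+1:ℕ))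
        = fseq m ℓ ((a - e) - 1) * fseq m ℓ ((b + e) + 1) := by
          push_cast; rw [ha, hb]
      _ ≤ fseq m ℓ (a - e) * fseq m ℓ (b + e) :=
          fseq_TP m hm ℓ _ _ (by linarith [Int.natCast_nonneg e])
      _ ≤ fseq m ℓ a * fseq m ℓ b := ihe a b hab

lemma fseq_LC (m : ℕ) (hm : 1 ≤ m) (ℓ : ℕ) (x : ℤ) :
    fseq m ℓ x * fseq m (ℓ+2) x ≤ fseq m (ℓ+1) x * fseq m (ℓ+1) x := by
  have h2 : fseq m (ℓ+2) x = ∑ c ∈ Finset.Icc (1:ℤ) (m:ℤ), ∑ c' ∈ Finset.Icc (1:ℤ) (m:ℤ),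
      fseq m ℓ (x - c - c') := by
    rw [fseq_succ]
    exact Finset.sum_congr rfl fun c _ => fseq_succ m ℓ (x - c)
  rw [h2, fseq_succ, Finset.sum_mul_sum, Finset.mul_sum]
  apply Finset.sum_le_sum
  intro c hc
  rw [Finset.mul_sum]
  apply Finset.sum_le_sum
  intro c' hc'
  simp only [Finset.mem_Icc] at hc hc'
  rcases le_total c c' with h | h
  · have := fseq_FP m hm ℓ c.toNat (x - c') (x - c) (by omega)
    have ha : (x - c') - (c.toNat : ℤ) = x - c - c' := by omega
    have hb : (x - c) + (c.toNat : ℤ) = x := by omega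
    rw [ha, hb] at this
    calc fseq m ℓ x * fseq m ℓ (x - c - c') = fseq m ℓ (x-c-c') * fseq m ℓ x := by ring
      _ ≤ fseq m ℓ (x - c') * fseq m ℓ (x - c) := this
      _ = fseq m ℓ (x - c) * fseq m ℓ (x - c') := by ring
  · have := fseq_FP m hm ℓ c'.toNat (x - c) (x - c') (by omega)
    have ha : (x - c) - (c'.toNat : ℤ) = x - c - c' := by omega
    have hb : (x - c') + (c'.toNat : ℤ) = x := by omega
    rw [ha, hb] at this
    calc fseq m ℓ x * fseq m ℓ (x - c - c') = fseq m ℓ (x-c-c') * fseq m ℓ x := by ring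
      _ ≤ fseq m ℓ (x - c) * fseq m ℓ (x - c') := this

lemma C_zero_eq (m k : ℕ) : C m k 0 = if k = 0 then 1 else 0 := by
  unfold C
  have : ∀ f : Fin 0 → Fin m, (∑ i, ((f i : ℕ) + 1)) = 0 := by
    intro f; simp
  by_cases hk : k = 0
  · subst hk
    rw [if_pos rfl]
    rw [Finset.filter_true_of_mem (fun f _ => (this f))]
    simp
  · rw [if_neg hk]
    rw [Finset.filter_false_of_mem, Finset.card_empty]
    intro f _
    rw [this f]
    omega

lemma C_succ (m k ℓ : ℕ) :
    C m k (ℓ+1) = ∑ v ∈ Finset.range m,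
      (if v+1 ≤ k then C m (k - (v+1)) ℓ else 0) := by
  classical
  unfold C
  rw [Finset.card_eq_sum_card_fiberwise
    (f := fun f : Fin (ℓ+1) → Fin m => f 0) (t := Finset.univ) (fun _ _ => Finset.mem_univ _)]
  rw [← Fin.sum_univ_eq_sum_range]
  apply Finset.sum_congr rfl
  intro v _
  have hsum : ∀ (g : Fin (ℓ+1) → Fin m),
      (∑ i, ((g i : ℕ) + 1)) = ((g 0 : ℕ) + 1) + ∑ i : Fin ℓ, ((g i.succ : ℕ) + 1) := by
    intro g
    exact Fin.sum_univ_succ _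
  by_cases hv : (v:ℕ)+1 ≤ k
  · rw [if_pos hv]
    show _ = (Finset.filter
      (fun g : Fin ℓ → Fin m => ∑ i, ((g i : ℕ) + 1) = k - (v+1)) Finset.univ).card
    apply Finset.card_nbij' (i := fun f => Fin.tail f) (j := fun g => Fin.cons v g)
    · intro f hf
      simp only [Finset.mem_coe, Finset.mem_filter, Finset.mem_univ, true_and] at hf ⊢
      obtain ⟨h1, h2⟩ := hf
      rw [hsum f, h2] at h1
      have : ∑ i : Fin ℓ, ((Fin.tail f i : ℕ) + 1) = ∑ i : Fin ℓ, ((f i.succ : ℕ) + 1) := rfl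
      rw [this]
      omega
    · intro g hg
      simp only [Finset.mem_coe, Finset.mem_filter, Finset.mem_univ, true_and] at hg ⊢
      constructor
      · rw [hsum (Fin.cons v g)]
        simp only [Fin.cons_zero, Fin.cons_succ]
        rw [hg]
        omega
      · simp
    · intro f hf
      simp only [Finset.mem_coe, Finset.mem_filter, Finset.mem_univ, true_and] at hf
      rw [← hf.2]
      exact Fin.cons_self_tail f
    · intro g _
      funext i
      simp [Fin.tail, Fin.cons_succ]
  · rw [if_neg hv]
    rw [Finset.card_eq_zero, Finset.filter_eq_empty_iff]
    intro f hf
    simp only [Finset.mem_filter, Finset.mem_univ, true_and] at hf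
    intro hfv
    rw [hsum f, hfv] at hf
    omega

lemma C_eq_fseq (m : ℕ) : ∀ (ℓ k : ℕ), C m k ℓ = fseq m ℓ (k : ℤ) := by
  intro ℓ
  induction ℓ with
  | zero =>
    intro k
    rw [C_zero_eq]
    simp [fseq]
  | succ n ih =>
    intro k
    rw [C_succ, fseq_succ]
    refine Finset.sum_nbij' (fun v => (v:ℤ)+1) (fun c => (c-1).toNat) ?_ ?_ ?_ ?_ ?_
    · intro v hv
      simp only [Finset.mem_range] at hv
      simp only [Finset.mem_Icc]
      omega
    · intro c hc
      simp only [Finset.mem_Icc] at hc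
      simp only [Finset.mem_range]
      omega
    · intro v _
      show (((v:ℤ)+1)-1).toNat = v
      omega
    · intro c hc
      simp only [Finset.mem_Icc] at hc
      show ((((c-1).toNat : ℕ) : ℤ)+1) = c
      omega
    · intro v hv
      simp only [Finset.mem_range] at hv
      by_cases h : v + 1 ≤ k
      · rw [if_pos h, ih]
        congr 1
        push_cast
        omega
      · rw [if_neg h]
        rw [fseq_lt m n _ (by push_cast; omega)]

lemma q_le_iff (m k t : ℕ) (hm : 1 ≤ m) : (k+m-1)/m ≤ t ↔ k ≤ m*t := by
  constructor
  · intro h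
    have h2 : (k+m-1)/m < t+1 := by omega
    rw [Nat.div_lt_iff_lt_mul (by omega)] at h2
    rw [show (t+1)*m = m*t+m from by ring] at h2
    omega
  · intro h
    have h2 : k+m-1 < (t+1)*m := by
      rw [show (t+1)*m = m*t+m from by ring]; omega
    have := (Nat.div_lt_iff_lt_mul (show 0 < m by omega)).mpr h2
    omega

theorem stmt_12 (k m : ℕ) (hk : 2 ≤ k) (hm : 2 ≤ m)
    (hC : ∀ d : ℕ, 2 * d ≤ k - (k + m - 1) / m →
      C m k (k - d) ≤ C m k ((k + m - 1) / m + d))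
    (a₁ b₁ a₂ b₂ : ℕ) (ha₁ : 1 ≤ a₁) (ha₂ : 1 ≤ a₂)
    (h₁ : a₁ ≤ b₁) (h₂ : a₂ ≤ b₂)
    (hcard : (Finset.Icc a₁ b₁).card = (Finset.Icc a₂ b₂).card)
    (hsum : k + (k + m - 1) / m ≤ a₁ + b₂) (hmin : a₁ ≤ a₂) :
    ∑ i ∈ Finset.Icc a₂ b₂, C m k i ≤ ∑ i ∈ Finset.Icc a₁ b₁, C m k i := by
  have hm1 : 1 ≤ m := by omega
  set q := (k + m - 1) / m with hq
  -- basic facts about C m k ·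
  have hzero : ∀ ℓ, k < ℓ → C m k ℓ = 0 := by
    intro ℓ hℓ
    rw [C_eq_fseq]
    exact fseq_lt m ℓ k (by exact_mod_cast hℓ)
  have hpos : ∀ ℓ, q ≤ ℓ → ℓ ≤ k → 0 < C m k ℓ := by
    intro ℓ h1 h2
    rw [C_eq_fseq]
    apply fseq_pos m hm1 ℓ k (by exact_mod_cast h2)
    have := (q_le_iff m k ℓ hm1).mp h1
    exact_mod_cast this
  have hLC : ∀ ℓ, C m k ℓ * C m k (ℓ+2) ≤ C m k (ℓ+1) * C m k (ℓ+1) := by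
    intro ℓ
    rw [C_eq_fseq, C_eq_fseq, C_eq_fseq]
    exact fseq_LC m hm1 ℓ k
  have hqk : q ≤ k := by
    rw [hq, q_le_iff m k k hm1]; nlinarith
  -- descent persists
  have desc : ∀ t, q ≤ t → C m k (t+1) ≤ C m k t → C m k (t+2) ≤ C m k (t+1) := by
    intro t hqt hth
    rcases Nat.eq_zero_or_pos (C m k (t+1)) with h0 | h0
    · have hk1 : k < t+1 := by
        by_contra hcon
        push_neg at hcon
        have := hpos (t+1) (by omega) hcon
        omega
      rw [hzero (t+2) (by omega), h0]
    · have h2 : C m k (t+1) * C m k (t+2) ≤ C m k (t+1) * C m k (t+1) := by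
        calc C m k (t+1) * C m k (t+2) ≤ C m k t * C m k (t+2) :=
              Nat.mul_le_mul_right _ hth
          _ ≤ C m k (t+1) * C m k (t+1) := hLC t
      exact Nat.le_of_mul_le_mul_left h2 h0
  have descge : ∀ t₀, q ≤ t₀ → C m k (t₀+1) ≤ C m k t₀ →
      ∀ t, t₀ ≤ t → C m k (t+1) ≤ C m k t := by
    intro t₀ h0 hd t ht
    induction t, ht using Nat.le_induction with
    | base => exact hd
    | succ n hn ih => exact desc n (by omega) ih
  -- KEY pointwise lemma
  have KEY : ∀ i j, j ≤ i → k + q ≤ i + j → C m k i ≤ C m k j := by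
    intro i j hji hs
    rcases le_or_gt i k with hik | hik
    swap
    · rw [hzero i hik]; exact Nat.zero_le _
    · have hd2 : 2*(k-i) ≤ k - q := by omega
      have hCq := hC (k-i) hd2
      rw [show k - (k-i) = i from by omega] at hCq
      -- hCq : C m k i ≤ C m k (q + (k-i))
      set j' := q + (k - i) with hj'
      have hj'j : j' ≤ j := by omega
      rcases le_or_gt (C m k j') (C m k j) with hc | hc
      · exact le_trans hCq hc
      · -- find a descent in [j', j)
        have hex : ∃ t, j' ≤ t ∧ t < j ∧ C m k (t+1) < C m k t := by
          by_contra hno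
          push_neg at hno
          have mono : ∀ t, j' ≤ t → t ≤ j → C m k j' ≤ C m k t := by
            intro t h1 h2
            induction t, h1 using Nat.le_induction with
            | base => exact le_refl _
            | succ n hn ih =>
              exact le_trans (ih (by omega)) (hno n hn (by omega))
          have := mono j hj'j (le_refl _)
          omega
        obtain ⟨t₀, ht1, ht2, ht3⟩ := hex
        have step := descge t₀ (by omega) (le_of_lt ht3)
        have mono2 : ∀ y, j ≤ y → C m k y ≤ C m k j := by
          intro y hy
          induction y, hy using Nat.le_induction with
          | base => exact le_refl _
          | succ n hn ih => exact le_trans (step n (by omega)) ih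
        exact mono2 i hji
  -- interval facts
  have hcards : b₁ + 1 - a₁ = b₂ + 1 - a₂ := by
    rw [Nat.card_Icc, Nat.card_Icc] at hcard
    omega
  have hb : b₂ - b₁ = a₂ - a₁ := by omega
  have hble : b₁ ≤ b₂ := by omega
  have haux : a₁ + b₂ = a₂ + b₁ := by omega
  -- reflection bound for the "extra" top part of S₂
  have main2 : ∀ (x y : ℕ), a₂ ≤ x → b₁ < x → x ≤ y → y ≤ b₂ →
      ∑ i ∈ Finset.Icc x y, C m k i ≤
        ∑ j ∈ Finset.Icc (a₁+b₂-y) (a₁+b₂-x), C m k j := by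
    intro x y hax hbx hxy hyb
    have step1 : ∑ i ∈ Finset.Icc x y, C m k i ≤
        ∑ i ∈ Finset.Icc x y, C m k (a₁+b₂-i) := by
      apply Finset.sum_le_sum
      intro i hi
      simp only [Finset.mem_Icc] at hi
      apply KEY
      · omega
      · omega
    refine le_trans step1 (le_of_eq ?_)
    refine Finset.sum_nbij' (fun i => a₁+b₂-i) (fun j => a₁+b₂-j) ?_ ?_ ?_ ?_ ?_
    · intro i hi
      simp only [Finset.mem_Icc] at hi ⊢
      omega
    · intro j hj
      simp only [Finset.mem_Icc] at hj ⊢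
      omega
    · intro i hi
      simp only [Finset.mem_Icc] at hi
      show a₁+b₂-(a₁+b₂-i) = i
      omega
    · intro j hj
      simp only [Finset.mem_Icc] at hj
      show a₁+b₂-(a₁+b₂-j) = j
      omega
    · intro i _
      rfl
  rcases le_or_gt a₂ b₁ with hcase | hcase
  · -- overlapping case
    rcases eq_or_lt_of_le hble with hbeq | hblt
    · -- b₁ = b₂ forces identical intervals
      have : a₁ = a₂ := by omega
      rw [this, hbeq]
    · have ha12 : a₁ < a₂ := by omega
      have s2 : Finset.Icc a₂ b₂ = Finset.Icc a₂ b₁ ∪ Finset.Icc (b₁+1) b₂ := by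
        ext x; simp only [Finset.mem_Icc, Finset.mem_union]; omega
      have d2 : Disjoint (Finset.Icc a₂ b₁) (Finset.Icc (b₁+1) b₂) := by
        rw [Finset.disjoint_left]
        intro x hx hx'
        simp only [Finset.mem_Icc] at hx hx'
        omega
      have s1 : Finset.Icc a₁ b₁ = Finset.Icc a₁ (a₂-1) ∪ Finset.Icc a₂ b₁ := by
        ext x; simp only [Finset.mem_Icc, Finset.mem_union]; omega
      have d1 : Disjoint (Finset.Icc a₁ (a₂-1)) (Finset.Icc a₂ b₁) := by
        rw [Finset.disjoint_left]
        intro x hx hx'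
        simp only [Finset.mem_Icc] at hx hx'
        omega
      rw [s2, s1, Finset.sum_union d2, Finset.sum_union d1]
      have htop := main2 (b₁+1) b₂ (by omega) (by omega) (by omega) (le_refl _)
      rw [show a₁+b₂-b₂ = a₁ from by omega, show a₁+b₂-(b₁+1) = a₂-1 from by omega] at htop
      omega
  · -- disjoint case
    have := main2 a₂ b₂ (le_refl _) hcase h₂ (le_refl _)
    rw [show a₁+b₂-b₂ = a₁ from by omega, show a₁+b₂-a₂ = b₁ from by omega] at this
    exact this
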